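/- Let (k_1, …, k_r) and (l_1, …, l_s) be admissible indices. Suppose there is an index i with 1 ≤ i ≤ min(r,s) such that k_j = l_j for all j < i and k_i < l_i. Then ζ*(k_1, …, k_r) > ζ*(l_1, …, l_s). -/
import Mathlib


open scoped BigOperators

/-- The set of weakly decreasing tuples of positive integers of length `r`. -/
def DecTuple (r : ℕ) : Set (Fin r → ℕ) :=
  {f | (∀ i, 1 ≤ f i) ∧ ∀ i j : Fin r, i ≤ j → f j ≤ f i}

/-- The multiple zeta-star value of an index `k`. -/
noncomputable def zetaStar {r : ℕ} (k : Fin r → ℕ) : ℝ :=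
  ∑' f : DecTuple r, ∏ i, (((f : Fin r → ℕ) i : ℝ) ^ (k i))⁻¹



set_option maxHeartbeats 1000000

def DSet (t n : ℕ) : Finset (Fin t → ℕ) :=
  (Fintype.piFinset fun _ : Fin t => Finset.Icc 1 n).filter
    fun f => ∀ i j : Fin t, i ≤ j → f j ≤ f i

noncomputable def G (t : ℕ) (a : Fin t → ℕ) (n : ℕ) : ℝ :=
  ∑ f ∈ DSet t n, ∏ i, (((f i : ℝ)) ^ (a i))⁻¹

lemma mem_DSet {t n : ℕ} {f : Fin t → ℕ} :
    f ∈ DSet t n ↔ (∀ i, 1 ≤ f i ∧ f i ≤ n) ∧ (∀ i j : Fin t, i ≤ j → f j ≤ f i) := by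
  simp [DSet, Fintype.mem_piFinset, forall_and]

lemma G_succ (t : ℕ) (a : Fin (t+1) → ℕ) (n : ℕ) :
    G (t+1) a n = ∑ m ∈ Finset.Icc 1 n, (((m:ℝ)) ^ (a 0))⁻¹ * G t (Fin.tail a) m := by
  have : ∀ m ∈ Finset.Icc 1 n, (((m:ℝ)) ^ (a 0))⁻¹ * G t (Fin.tail a) m
      = ∑ g ∈ DSet t m, (((m:ℝ)) ^ (a 0))⁻¹ * ∏ i, (((g i : ℝ)) ^ (Fin.tail a i))⁻¹ := by
    intro m _; rw [G, Finset.mul_sum]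
  rw [Finset.sum_congr rfl this,
    ← Finset.sum_sigma (Finset.Icc 1 n) (fun m => DSet t m)
      (fun x => (((x.1:ℝ)) ^ (a 0))⁻¹ * ∏ i, (((x.2 i : ℝ)) ^ (Fin.tail a i))⁻¹)]
  rw [G]
  refine Finset.sum_nbij' (fun f => (⟨f 0, Fin.tail f⟩ : Σ _ : ℕ, Fin t → ℕ))
    (fun x => Fin.cons x.1 x.2) ?_ ?_ ?_ ?_ ?_
  · intro f hf
    rw [mem_DSet] at hf
    rw [Finset.mem_sigma]
    constructor
    · exact Finset.mem_Icc.2 ⟨(hf.1 0).1, (hf.1 0).2⟩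
    · rw [mem_DSet]
      refine ⟨fun i => ⟨(hf.1 i.succ).1, hf.2 0 i.succ (Fin.zero_le _)⟩, ?_⟩
      intro i j hij
      exact hf.2 i.succ j.succ (Fin.succ_le_succ_iff.2 hij)
  · intro x hx
    rw [Finset.mem_sigma] at hx
    obtain ⟨hx1, hx2⟩ := hx
    rw [Finset.mem_Icc] at hx1
    rw [mem_DSet] at hx2 ⊢
    constructor
    · intro i
      refine Fin.cases ?_ ?_ i
      · simpa using hx1
      · intro i'
        simp only [Fin.cons_succ]
        exact ⟨(hx2.1 i').1, le_trans (hx2.1 i').2 hx1.2⟩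
    · intro i j hij
      beta_reduce
      rcases Fin.eq_zero_or_eq_succ j with rfl | ⟨j', rfl⟩
      · have hi0 : i = 0 := Fin.le_zero_iff.1 hij
        subst hi0; exact le_refl _
      · rcases Fin.eq_zero_or_eq_succ i with rfl | ⟨i', rfl⟩
        · simp only [Fin.cons_zero, Fin.cons_succ]
          exact (hx2.1 j').2
        · simp only [Fin.cons_succ]
          exact hx2.2 i' j' (Fin.succ_le_succ_iff.1 hij)
  · intro f hf; exact Fin.cons_self_tail f
  · intro x hx; ext <;> simp [Fin.tail_cons]
  · intro f hf
    rw [Fin.prod_univ_succ]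
    rfl

lemma G_nonneg (t : ℕ) (a : Fin t → ℕ) (n : ℕ) : 0 ≤ G t a n := by
  refine Finset.sum_nonneg fun f _ => Finset.prod_nonneg fun i _ => ?_
  positivity

lemma G_zero (a : Fin 0 → ℕ) (n : ℕ) : G 0 a n = 1 := by
  have h : DSet 0 n = {fun i => i.elim0} := by
    refine Finset.eq_singleton_iff_unique_mem.2 ⟨?_, ?_⟩
    · rw [mem_DSet]; exact ⟨fun i => i.elim0, fun i => i.elim0⟩
    · intro f _; funext i; exact i.elim0
  rw [G, h, Finset.sum_singleton]
  simp

lemma one_le_G (t : ℕ) (a : Fin t → ℕ) (n : ℕ) (hn : 1 ≤ n) : 1 ≤ G t a n := by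
  induction t generalizing n with
  | zero => rw [G_zero]
  | succ t ih =>
    rw [G_succ]
    have h1 : (1:ℕ) ∈ Finset.Icc 1 n := Finset.mem_Icc.2 ⟨le_refl _, hn⟩
    calc (1:ℝ) ≤ (((1:ℕ):ℝ) ^ (a 0))⁻¹ * G t (Fin.tail a) 1 := by
          simpa using ih (Fin.tail a) 1 (le_refl _)
      _ ≤ _ := Finset.single_le_sum (f := fun m => (((m:ℕ):ℝ) ^ (a 0))⁻¹ * G t (Fin.tail a) m)
          (fun m _ => mul_nonneg (by positivity) (G_nonneg _ _ _)) h1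

lemma term_le_one {t : ℕ} (a : Fin (t+1) → ℕ) (ha : ∀ j, 1 ≤ a j) {m : ℕ} (hm : 1 ≤ m)
    {x : ℝ} (hx : x ≤ m) : (((m:ℝ)) ^ (a 0))⁻¹ * x ≤ 1 := by
  have hm1 : (1:ℝ) ≤ (m:ℝ) := by exact_mod_cast hm
  have h2 : (m:ℝ) ≤ (m:ℝ) ^ (a 0) := le_self_pow₀ (by linarith) (by have := ha 0; omega)
  have hpos : (0:ℝ) < (m:ℝ) ^ (a 0) := by positivity
  rw [inv_mul_le_iff₀ hpos]
  nlinarith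

lemma G_le (t : ℕ) (a : Fin t → ℕ) (ha : ∀ j, 1 ≤ a j) (n : ℕ) (hn : 1 ≤ n) :
    G t a n ≤ n := by
  induction t generalizing n with
  | zero => rw [G_zero]; exact_mod_cast hn
  | succ t ih =>
    rw [G_succ]
    calc ∑ m ∈ Finset.Icc 1 n, (((m:ℝ)) ^ (a 0))⁻¹ * G t (Fin.tail a) m
        ≤ ∑ m ∈ Finset.Icc 1 n, (1:ℝ) := by
          refine Finset.sum_le_sum fun m hm => ?_
          have hm1 : 1 ≤ m := (Finset.mem_Icc.1 hm).1
          exact term_le_one a ha hm1 (ih (Fin.tail a) (fun j => ha j.succ) m hm1)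
      _ = n := by simp [Nat.card_Icc]

lemma G_lt (t : ℕ) (a : Fin t → ℕ) (ha : ∀ j, 1 ≤ a j) (n : ℕ) (hn : 2 ≤ n) :
    G t a n < n := by
  induction t generalizing n with
  | zero => rw [G_zero]; exact_mod_cast hn
  | succ t ih =>
    rw [G_succ]
    have : ∑ m ∈ Finset.Icc 1 n, (((m:ℝ)) ^ (a 0))⁻¹ * G t (Fin.tail a) m
        < ∑ m ∈ Finset.Icc 1 n, (1:ℝ) := by
      refine Finset.sum_lt_sum (fun m hm => ?_) ⟨2, Finset.mem_Icc.2 ⟨by omega, hn⟩, ?_⟩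
      · have hm1 : 1 ≤ m := (Finset.mem_Icc.1 hm).1
        exact term_le_one a ha hm1 (G_le t (Fin.tail a) (fun j => ha j.succ) m hm1)
      · have h2 : G t (Fin.tail a) 2 < 2 := ih (Fin.tail a) (fun j => ha j.succ) 2 (le_refl _)
        have hpos : (0:ℝ) < (((2:ℕ):ℝ) ^ (a 0))⁻¹ := by positivity
        calc (((2:ℕ):ℝ) ^ (a 0))⁻¹ * G t (Fin.tail a) 2
            < (((2:ℕ):ℝ) ^ (a 0))⁻¹ * 2 := by
              exact mul_lt_mul_of_pos_left (by exact_mod_cast h2) hpos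
          _ ≤ 1 := term_le_one a ha (by omega) (by norm_num)
    exact this.trans_le (le_of_eq (by simp [Nat.card_Icc]))

lemma G_gap {p q : ℕ} (a : Fin (p+1) → ℕ) (b : Fin (q+1) → ℕ) (δ : ℝ)
    (key : ∀ m : ℕ, 1 ≤ m →
      (((m:ℕ):ℝ) ^ (b 0))⁻¹ * G q (Fin.tail b) m ≤ (((m:ℕ):ℝ) ^ (a 0))⁻¹ * G p (Fin.tail a) m)
    (key2 : (((2:ℕ):ℝ) ^ (b 0))⁻¹ * G q (Fin.tail b) 2 + δ
      ≤ (((2:ℕ):ℝ) ^ (a 0))⁻¹ * G p (Fin.tail a) 2) :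
    ∀ n : ℕ, (1 ≤ n → G (q+1) b n ≤ G (p+1) a n) ∧ (2 ≤ n → G (q+1) b n + δ ≤ G (p+1) a n) := by
  intro n
  constructor
  · intro hn
    rw [G_succ, G_succ]
    exact Finset.sum_le_sum fun m hm => key m (Finset.mem_Icc.1 hm).1
  · intro hn
    rw [G_succ, G_succ]
    have h2 : (2:ℕ) ∈ Finset.Icc 1 n := Finset.mem_Icc.2 ⟨by omega, hn⟩
    have hs := Finset.single_le_sum (f := fun m : ℕ =>
        (((m:ℕ):ℝ) ^ (a 0))⁻¹ * G p (Fin.tail a) m - (((m:ℕ):ℝ) ^ (b 0))⁻¹ * G q (Fin.tail b) m)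
      (fun m hm => sub_nonneg.2 (key m (Finset.mem_Icc.1 hm).1)) h2
    rw [Finset.sum_sub_distrib] at hs
    have := key2
    linarith

lemma comp (i : ℕ) : ∀ (p q : ℕ) (a : Fin p → ℕ) (b : Fin q → ℕ),
    (∀ j, 1 ≤ a j) → (∀ j, 1 ≤ b j) → ∀ (hip : i < p) (hiq : i < q),
    (∀ j : ℕ, (hj : j < i) → a ⟨j, by omega⟩ = b ⟨j, by omega⟩) →
    a ⟨i, hip⟩ < b ⟨i, hiq⟩ →
    ∃ δ : ℝ, 0 < δ ∧
      ∀ n : ℕ, (1 ≤ n → G q b n ≤ G p a n) ∧ (2 ≤ n → G q b n + δ ≤ G p a n) := by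
  induction i with
  | zero =>
    intro p q a b ha hb hip hiq heq hlt
    obtain ⟨p, rfl⟩ : ∃ p', p = p'+1 := ⟨p-1, by omega⟩
    obtain ⟨q, rfl⟩ : ∃ q', q = q'+1 := ⟨q-1, by omega⟩
    have hlt' : a 0 < b 0 := by simpa using hlt
    have key : ∀ m : ℕ, 1 ≤ m →
        (((m:ℕ):ℝ) ^ (b 0))⁻¹ * G q (Fin.tail b) m
          ≤ (((m:ℕ):ℝ) ^ (a 0))⁻¹ * G p (Fin.tail a) m := by
      intro m hm
      have hm1 : (1:ℝ) ≤ (m:ℝ) := by exact_mod_cast hm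
      have h3 : (((m:ℕ):ℝ) ^ (b 0))⁻¹ * G q (Fin.tail b) m ≤ (((m:ℕ):ℝ) ^ (b 0))⁻¹ * m :=
        mul_le_mul_of_nonneg_left (G_le q (Fin.tail b) (fun j => hb j.succ) m hm) (by positivity)
      have h4 : (((m:ℕ):ℝ) ^ (b 0))⁻¹ * m ≤ (((m:ℕ):ℝ) ^ (a 0))⁻¹ := by
        rw [inv_mul_le_iff₀ (by positivity), ← div_eq_mul_inv, le_div_iff₀ (by positivity)]
        calc (m:ℝ) * (m:ℝ) ^ (a 0) = (m:ℝ) ^ (a 0 + 1) := by rw [pow_succ]; ring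
          _ ≤ (m:ℝ) ^ (b 0) := pow_le_pow_right₀ hm1 (by omega)
      have h5 : (((m:ℕ):ℝ) ^ (a 0))⁻¹ ≤ (((m:ℕ):ℝ) ^ (a 0))⁻¹ * G p (Fin.tail a) m :=
        le_mul_of_one_le_right (by positivity) (one_le_G p (Fin.tail a) m hm)
      linarith
    have keylt : (((2:ℕ):ℝ) ^ (b 0))⁻¹ * G q (Fin.tail b) 2
        < (((2:ℕ):ℝ) ^ (a 0))⁻¹ * G p (Fin.tail a) 2 := by
      have hG2 : G q (Fin.tail b) 2 < 2 := by
        exact_mod_cast G_lt q (Fin.tail b) (fun j => hb j.succ) 2 (le_refl _)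
      have h3 : (((2:ℕ):ℝ) ^ (b 0))⁻¹ * G q (Fin.tail b) 2 < (((2:ℕ):ℝ) ^ (b 0))⁻¹ * 2 :=
        mul_lt_mul_of_pos_left (by exact_mod_cast hG2) (by positivity)
      have h4 : (((2:ℕ):ℝ) ^ (b 0))⁻¹ * ((2:ℕ):ℝ) ≤ (((2:ℕ):ℝ) ^ (a 0))⁻¹ := by
        rw [inv_mul_le_iff₀ (by positivity), ← div_eq_mul_inv, le_div_iff₀ (by positivity)]
        calc ((2:ℕ):ℝ) * ((2:ℕ):ℝ) ^ (a 0) = ((2:ℕ):ℝ) ^ (a 0 + 1) := by rw [pow_succ]; ring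
          _ ≤ ((2:ℕ):ℝ) ^ (b 0) := pow_le_pow_right₀ (by norm_num) (by omega)
      have h5 : (((2:ℕ):ℝ) ^ (a 0))⁻¹ ≤ (((2:ℕ):ℝ) ^ (a 0))⁻¹ * G p (Fin.tail a) 2 :=
        le_mul_of_one_le_right (by positivity) (one_le_G p (Fin.tail a) 2 (by omega))
      push_cast at h3 h4 h5 ⊢
      linarith
    refine ⟨(((2:ℕ):ℝ) ^ (a 0))⁻¹ * G p (Fin.tail a) 2
        - (((2:ℕ):ℝ) ^ (b 0))⁻¹ * G q (Fin.tail b) 2, sub_pos.2 keylt, ?_⟩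
    exact G_gap a b _ key (by linarith)
  | succ i ih =>
    intro p q a b ha hb hip hiq heq hlt
    obtain ⟨p, rfl⟩ : ∃ p', p = p'+1 := ⟨p-1, by omega⟩
    obtain ⟨q, rfl⟩ : ∃ q', q = q'+1 := ⟨q-1, by omega⟩
    have hip' : i < p := by omega
    have hiq' : i < q := by omega
    have heq' : ∀ j : ℕ, (hj : j < i) →
        Fin.tail a ⟨j, by omega⟩ = Fin.tail b ⟨j, by omega⟩ := by
      intro j hj
      have := heq (j+1) (by omega)
      simpa [Fin.tail, Fin.succ_mk] using this
    have hlt' : Fin.tail a ⟨i, hip'⟩ < Fin.tail b ⟨i, hiq'⟩ := by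
      have := hlt
      simpa [Fin.tail, Fin.succ_mk] using this
    obtain ⟨δ', hδ'pos, H⟩ := ih p q (Fin.tail a) (Fin.tail b)
      (fun j => ha j.succ) (fun j => hb j.succ) hip' hiq' heq' hlt'
    have hab0 : a 0 = b 0 := by
      have := heq 0 (by omega)
      simpa using this
    have key : ∀ m : ℕ, 1 ≤ m →
        (((m:ℕ):ℝ) ^ (b 0))⁻¹ * G q (Fin.tail b) m
          ≤ (((m:ℕ):ℝ) ^ (a 0))⁻¹ * G p (Fin.tail a) m := by
      intro m hm
      rw [← hab0]
      exact mul_le_mul_of_nonneg_left ((H m).1 hm) (by positivity)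
    refine ⟨(((2:ℕ):ℝ) ^ (a 0))⁻¹ * δ', by positivity, ?_⟩
    refine G_gap a b _ key ?_
    rw [← hab0, ← mul_add]
    exact mul_le_mul_of_nonneg_left ((H 2).2 (le_refl _)) (by positivity)

lemma term_le_rpow {r : ℕ} (hr : 1 ≤ r) (k : Fin r → ℕ)
    (hkadm : 2 ≤ k ⟨0, by omega⟩) (hkpos : ∀ i, 1 ≤ k i)
    (f : Fin r → ℕ) (h1 : ∀ i, 1 ≤ f i) (hdec : ∀ i j : Fin r, i ≤ j → f j ≤ f i) :
    ∏ i, (((f i : ℝ)) ^ (k i))⁻¹ ≤ ∏ i, (((f i : ℝ)) ^ (1 + (r:ℝ)⁻¹))⁻¹ := by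
  obtain ⟨r', rfl⟩ : ∃ r'', r = r''+1 := ⟨r-1, by omega⟩
  have hk0 : 2 ≤ k 0 := by simpa using hkadm
  have hf1 : ∀ i, (1:ℝ) ≤ (f i : ℝ) := fun i => by exact_mod_cast h1 i
  have hfpos : ∀ i, (0:ℝ) < (f i : ℝ) := fun i => lt_of_lt_of_le zero_lt_one (hf1 i)
  have hfle : ∀ i, (f i : ℝ) ≤ (f 0 : ℝ) := by
    intro i; exact_mod_cast hdec 0 i (Fin.zero_le _)
  set sI : ℝ := ((r'+1 : ℕ) : ℝ)⁻¹ with hsI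
  have hsIpos : 0 < sI := by positivity
  have step1 : ∏ i, (((f i : ℝ)) ^ (k i))⁻¹
      ≤ (f 0 : ℝ)⁻¹ * ∏ i, ((f i : ℝ))⁻¹ := by
    rw [Fin.prod_univ_succ]
    have hhead : (((f 0 : ℝ)) ^ (k 0))⁻¹ ≤ ((f 0 : ℝ) * (f 0 : ℝ))⁻¹ := by
      apply inv_anti₀ (mul_pos (hfpos 0) (hfpos 0))
      calc (f 0 : ℝ) * (f 0 : ℝ) = (f 0 : ℝ) ^ 2 := by ring
        _ ≤ (f 0 : ℝ) ^ (k 0) := pow_le_pow_right₀ (hf1 0) hk0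
    have htail : ∏ i : Fin r', (((f i.succ : ℝ)) ^ (k i.succ))⁻¹
        ≤ ∏ i : Fin r', ((f i.succ : ℝ))⁻¹ := by
      refine Finset.prod_le_prod (fun i _ => by positivity) (fun i _ => ?_)
      exact inv_anti₀ (hfpos _)
        (le_self_pow₀ (hf1 _) (by have := hkpos i.succ; omega))
    calc (((f 0 : ℝ)) ^ (k 0))⁻¹ * ∏ i : Fin r', (((f i.succ : ℝ)) ^ (k i.succ))⁻¹
        ≤ ((f 0 : ℝ) * (f 0 : ℝ))⁻¹ * ∏ i : Fin r', ((f i.succ : ℝ))⁻¹ :=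
          mul_le_mul hhead htail (Finset.prod_nonneg fun i _ => by positivity) (by positivity)
      _ = (f 0 : ℝ)⁻¹ * ∏ i : Fin (r'+1), ((f i : ℝ))⁻¹ := by
          rw [Fin.prod_univ_succ, mul_inv]; ring
  have hprod_pos : 0 < ∏ i : Fin (r'+1), ((f i : ℝ)) ^ sI :=
    Finset.prod_pos fun i _ => Real.rpow_pos_of_pos (hfpos i) _
  have hP : ∏ i : Fin (r'+1), ((f i : ℝ)) ^ sI ≤ (f 0 : ℝ) := by
    calc ∏ i : Fin (r'+1), ((f i : ℝ)) ^ sI ≤ ∏ _i : Fin (r'+1), ((f 0 : ℝ)) ^ sI :=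
        Finset.prod_le_prod (fun i _ => (Real.rpow_pos_of_pos (hfpos i) _).le)
          (fun i _ => Real.rpow_le_rpow (hfpos i).le (hfle i) hsIpos.le)
      _ = (((f 0 : ℝ)) ^ sI) ^ ((r'+1 : ℕ)) := by
          rw [Finset.prod_const, Finset.card_univ, Fintype.card_fin]
      _ = ((f 0 : ℝ)) ^ (sI * ((r'+1 : ℕ) : ℝ)) := by
          rw [← Real.rpow_natCast (((f 0 : ℝ)) ^ sI), ← Real.rpow_mul (hfpos 0).le]
      _ = (f 0 : ℝ) := by rw [hsI, inv_mul_cancel₀ (by positivity), Real.rpow_one]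
  have step2 : (f 0 : ℝ)⁻¹ ≤ ∏ i : Fin (r'+1), (((f i : ℝ)) ^ sI)⁻¹ := by
    rw [Finset.prod_inv_distrib]
    exact inv_anti₀ hprod_pos hP
  have step3 : (∏ i : Fin (r'+1), (((f i : ℝ)) ^ sI)⁻¹) * ∏ i : Fin (r'+1), ((f i : ℝ))⁻¹
      = ∏ i, (((f i : ℝ)) ^ (1 + ((r'+1 : ℕ) : ℝ)⁻¹))⁻¹ := by
    rw [← Finset.prod_mul_distrib]
    refine Finset.prod_congr rfl fun i _ => ?_
    rw [← mul_inv]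
    congr 1
    rw [Real.rpow_add (hfpos i), Real.rpow_one, ← hsI]
    ring
  calc ∏ i, (((f i : ℝ)) ^ (k i))⁻¹ ≤ (f 0 : ℝ)⁻¹ * ∏ i, ((f i : ℝ))⁻¹ := step1
    _ ≤ (∏ i : Fin (r'+1), (((f i : ℝ)) ^ sI)⁻¹) * ∏ i, ((f i : ℝ))⁻¹ :=
        mul_le_mul_of_nonneg_right step2 (Finset.prod_nonneg fun i _ => by positivity)
    _ = _ := step3

lemma summable_term {r : ℕ} (hr : 1 ≤ r) (k : Fin r → ℕ)
    (hkadm : 2 ≤ k ⟨0, by omega⟩) (hkpos : ∀ i, 1 ≤ k i) :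
    Summable (fun f : DecTuple r => ∏ i, (((f : Fin r → ℕ) i : ℝ) ^ (k i))⁻¹) := by
  have he : 1 < 1 + (r:ℝ)⁻¹ := by
    have : (0:ℝ) < (r:ℝ)⁻¹ := by positivity
    linarith
  have hsum : Summable (fun m : ℕ => (((m:ℕ):ℝ) ^ (1 + (r:ℝ)⁻¹))⁻¹) :=
    Real.summable_nat_rpow_inv.2 he
  have hZ0 : 0 ≤ ∑' m : ℕ, (((m:ℕ):ℝ) ^ (1 + (r:ℝ)⁻¹))⁻¹ := tsum_nonneg fun m => by positivity
  apply summable_of_sum_le (c := (∑' m : ℕ, (((m:ℕ):ℝ) ^ (1 + (r:ℝ)⁻¹))⁻¹) ^ r)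
  · intro x
    exact Finset.prod_nonneg fun i _ => by positivity
  · intro u
    set N : ℕ := 1 ⊔ u.sup (fun x => (x : Fin r → ℕ) ⟨0, by omega⟩) with hN_def
    have hsub : u.map (Function.Embedding.subtype _)
        ⊆ Fintype.piFinset (fun _ : Fin r => Finset.Icc 1 N) := by
      intro g hg
      rw [Finset.mem_map] at hg
      obtain ⟨x, hxu, rfl⟩ := hg
      rw [Fintype.mem_piFinset]
      intro i
      rw [Finset.mem_Icc]
      refine ⟨x.2.1 i, ?_⟩
      have h1 : (x : Fin r → ℕ) i ≤ (x : Fin r → ℕ) ⟨0, by omega⟩ :=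
        x.2.2 ⟨0, by omega⟩ i (by simp [Fin.le_def])
      have h2 : (x : Fin r → ℕ) ⟨0, by omega⟩ ≤ N := by
        rw [hN_def]
        exact le_trans
          (Finset.le_sup (f := fun y : ↥(DecTuple r) => (y : Fin r → ℕ) ⟨0, by omega⟩) hxu)
          le_sup_right
      exact le_trans h1 h2
    calc ∑ x ∈ u, ∏ i, (((x : Fin r → ℕ) i : ℝ) ^ (k i))⁻¹
        ≤ ∑ x ∈ u, ∏ i, ((((x : Fin r → ℕ) i : ℝ)) ^ (1 + (r:ℝ)⁻¹))⁻¹ :=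
          Finset.sum_le_sum fun x _ => term_le_rpow hr k hkadm hkpos _ x.2.1 x.2.2
      _ = ∑ g ∈ u.map (Function.Embedding.subtype _), ∏ i, (((g i : ℕ):ℝ) ^ (1 + (r:ℝ)⁻¹))⁻¹ :=
          (Finset.sum_map u (Function.Embedding.subtype _)
            (fun g => ∏ i, (((g i : ℕ):ℝ) ^ (1 + (r:ℝ)⁻¹))⁻¹)).symm
      _ ≤ ∑ g ∈ Fintype.piFinset (fun _ : Fin r => Finset.Icc 1 N),
            ∏ i, (((g i : ℕ):ℝ) ^ (1 + (r:ℝ)⁻¹))⁻¹ :=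
          Finset.sum_le_sum_of_subset_of_nonneg hsub
            (fun g _ _ => Finset.prod_nonneg fun i _ => by positivity)
      _ = ∏ _i : Fin r, ∑ m ∈ Finset.Icc 1 N, (((m:ℕ):ℝ) ^ (1 + (r:ℝ)⁻¹))⁻¹ :=
          (Finset.prod_univ_sum (fun _ : Fin r => Finset.Icc 1 N)
            (fun _ m => (((m:ℕ):ℝ) ^ (1 + (r:ℝ)⁻¹))⁻¹)).symm
      _ ≤ ∏ _i : Fin r, ∑' m : ℕ, (((m:ℕ):ℝ) ^ (1 + (r:ℝ)⁻¹))⁻¹ :=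
          Finset.prod_le_prod (fun i _ => Finset.sum_nonneg fun m _ => by positivity)
            (fun i _ => Summable.sum_le_tsum _ (fun m _ => by positivity) hsum)
      _ = (∑' m : ℕ, (((m:ℕ):ℝ) ^ (1 + (r:ℝ)⁻¹))⁻¹) ^ r := by
          rw [Finset.prod_const, Finset.card_univ, Fintype.card_fin]

lemma DSet_mem_DecTuple {t n : ℕ} {f : Fin t → ℕ} (hf : f ∈ DSet t n) : f ∈ DecTuple t := by
  rw [mem_DSet] at hf
  exact ⟨fun i => (hf.1 i).1, hf.2⟩

lemma G_le_zetaStar {r : ℕ} (hr : 1 ≤ r) (k : Fin r → ℕ)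
    (hkadm : 2 ≤ k ⟨0, by omega⟩) (hkpos : ∀ i, 1 ≤ k i) (n : ℕ) :
    G r k n ≤ zetaStar k := by
  classical
  have hsumm := summable_term hr k hkadm hkpos
  set S : Finset ↥(DecTuple r) := (DSet r n).attach.map
    ⟨fun x => ⟨x.1, DSet_mem_DecTuple x.2⟩,
     fun x y h => by injection h with h'; exact Subtype.ext h'⟩ with hS_def
  have hGS : G r k n = ∑ x ∈ S, ∏ i, (((x : Fin r → ℕ) i : ℝ) ^ (k i))⁻¹ := by
    rw [hS_def, Finset.sum_map]
    rw [G]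
    exact (Finset.sum_attach (DSet r n) (fun f => ∏ i, (((f i : ℝ)) ^ (k i))⁻¹)).symm
  rw [hGS, zetaStar]
  exact Summable.sum_le_tsum S (fun x _ => Finset.prod_nonneg fun i _ => by positivity) hsumm


/-- if the indices agree before position `i` and `k_i < l_i`,
then ζ*(k_1,…,k_r) > ζ*(l_1,…,l_s). (Positions are 0-based here.) -/
theorem stmt3 (r s : ℕ) (hr : 1 ≤ r) (hs : 1 ≤ s)
    (k : Fin r → ℕ) (l : Fin s → ℕ)
    (hkadm : 2 ≤ k ⟨0, by omega⟩) (hkpos : ∀ i, 1 ≤ k i)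
    (hladm : 2 ≤ l ⟨0, by omega⟩) (hlpos : ∀ i, 1 ≤ l i)
    (i : ℕ) (hir : i < r) (his : i < s)
    (heq : ∀ j : ℕ, (hj : j < i) → k ⟨j, by omega⟩ = l ⟨j, by omega⟩)
    (hlt : k ⟨i, hir⟩ < l ⟨i, his⟩) :
    zetaStar l < zetaStar k := by
  classical
  obtain ⟨δ, hδ, H⟩ := comp i r s k l hkpos hlpos hir his (fun j hj => heq j hj) hlt
  have hbound : ∀ u : Finset ↥(DecTuple s),
      ∑ x ∈ u, ∏ j, (((x : Fin s → ℕ) j : ℝ) ^ (l j))⁻¹ ≤ zetaStar k - δ := by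
    intro u
    set N : ℕ := 2 ⊔ u.sup (fun x => (x : Fin s → ℕ) ⟨0, by omega⟩) with hN_def
    have h2N : 2 ≤ N := le_sup_left
    have hsub : u.map (Function.Embedding.subtype _) ⊆ DSet s N := by
      intro g hg
      rw [Finset.mem_map] at hg
      obtain ⟨x, hxu, rfl⟩ := hg
      rw [mem_DSet]
      refine ⟨fun j => ⟨x.2.1 j, ?_⟩, x.2.2⟩
      have h1 : (x : Fin s → ℕ) j ≤ (x : Fin s → ℕ) ⟨0, by omega⟩ :=
        x.2.2 ⟨0, by omega⟩ j (by simp [Fin.le_def])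
      have h2 : (x : Fin s → ℕ) ⟨0, by omega⟩ ≤ N := by
        rw [hN_def]
        exact le_trans
          (Finset.le_sup (f := fun y : ↥(DecTuple s) => (y : Fin s → ℕ) ⟨0, by omega⟩) hxu)
          le_sup_right
      exact le_trans h1 h2
    have step1 : ∑ x ∈ u, ∏ j, (((x : Fin s → ℕ) j : ℝ) ^ (l j))⁻¹ ≤ G s l N := by
      calc ∑ x ∈ u, ∏ j, (((x : Fin s → ℕ) j : ℝ) ^ (l j))⁻¹
          = ∑ g ∈ u.map (Function.Embedding.subtype _), ∏ j, (((g j : ℕ):ℝ) ^ (l j))⁻¹ :=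
            (Finset.sum_map u (Function.Embedding.subtype _)
              (fun g => ∏ j, (((g j : ℕ):ℝ) ^ (l j))⁻¹)).symm
        _ ≤ ∑ g ∈ DSet s N, ∏ j, (((g j : ℕ):ℝ) ^ (l j))⁻¹ :=
            Finset.sum_le_sum_of_subset_of_nonneg hsub
              (fun g _ _ => Finset.prod_nonneg fun j _ => by positivity)
        _ = G s l N := rfl
    have step2 : G s l N + δ ≤ G r k N := (H N).2 h2N
    have step3 : G r k N ≤ zetaStar k := G_le_zetaStar hr k hkadm hkpos N
    linarith
  have h0 : 0 ≤ zetaStar k - δ := by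
    have h1 := (H 2).2 (le_refl 2)
    have h2 := G_le_zetaStar hr k hkadm hkpos 2
    have h3 : 0 ≤ G s l 2 := G_nonneg _ _ _
    linarith
  have hfinal : zetaStar l ≤ zetaStar k - δ := by
    rw [zetaStar]
    exact tsum_le_of_sum_le' h0 hbound
  linarith
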